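/- Let Y be a finite set and let negative entropy φ(π) = ∑_y π(y) log π(y) on the simplex, with Bregman divergence D_φ(π,π') = KL(π‖π'). Let δ : Y → ℝ, π⁻ a fully supported distribution, and π⁺ = argmax_{π ∈ Δ(Y)} [⟨π, δ⟩ − KL(π‖π⁻)]. Then for any distribution π ∈ Δ(Y) absolutely continuous with respect to π⁻: KL(π‖π⁺) ≤ KL(π‖π⁻) + ∑_y (π⁻(y) − π(y))·δ(y) + 2·‖δ‖_∞². -/

import Mathlib

open Finset

/-- KL divergence between two distributions on a finite set, which is the
Bregman divergence associated with the negative entropy mirror map. -/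
noncomputable def KL {Y : Type*} [Fintype Y] (p q : Y → ℝ) : ℝ :=
  ∑ y, p y * Real.log (p y / q y)

/-- exp x ≤ 1 + x + x² for |x| ≤ 1. -/
lemma exp_le_one_add_add_sq {x : ℝ} (hx : |x| ≤ 1) :
    Real.exp x ≤ 1 + x + x ^ 2 := by
  have h := Real.exp_bound hx (n := 2) (by norm_num)
  have h2 : (∑ m ∈ range 2, x ^ m / m.factorial) = 1 + x := by
    simp [Finset.sum_range_succ]
  rw [h2] at h
  norm_num [Nat.factorial] at h
  have habs := abs_le.mp h
  have hsq : |x| ^ 2 = x ^ 2 := sq_abs x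
  nlinarith [habs.2]

/-- Gibbs: KL nonneg for positive p, nonneg q with equal sums, termwise. -/
lemma kl_term_nonneg {p q : ℝ} (hp : 0 < p) (hq : 0 < q) :
    p - q ≤ p * Real.log (p / q) := by
  have h := Real.log_le_sub_one_of_pos (x := q / p) (by positivity)
  have hlog : Real.log (q / p) = - Real.log (p / q) := by
    rw [Real.log_div hq.ne' hp.ne', Real.log_div hp.ne' hq.ne']; ring
  rw [hlog] at h
  have := mul_le_mul_of_nonneg_left h hp.le
  have hqp : p * (q / p - 1) = q - p := by field_simp
  nlinarith

lemma kl_term_eq {p q : ℝ} (hp : 0 < p) (hq : 0 < q)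
    (h : p * Real.log (p / q) - (p - q) = 0) : p = q := by
  by_contra hne
  have hne' : q / p ≠ 1 := by
    intro h1
    rw [div_eq_one_iff_eq hp.ne'] at h1
    exact hne h1.symm
  have hlt := Real.log_lt_sub_one_of_pos (x := q / p) (by positivity) hne'
  have hlog : Real.log (q / p) = - Real.log (p / q) := by
    rw [Real.log_div hq.ne' hp.ne', Real.log_div hp.ne' hq.ne']; ring
  rw [hlog] at hlt
  have := mul_lt_mul_of_pos_left hlt hp
  have hqp : p * (q / p - 1) = q - p := by field_simp
  nlinarith

theorem omd_one_step_lemma {Y : Type*} [Fintype Y] [Nonempty Y]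
    (δ : Y → ℝ)
    (πminus : Y → ℝ) (hm0 : ∀ y, 0 < πminus y) (hm1 : ∑ y, πminus y = 1)
    (πplus : Y → ℝ) (hp0 : ∀ y, 0 < πplus y) (hp1 : ∑ y, πplus y = 1)
    (hargmax : ∀ π : Y → ℝ, (∀ y, 0 ≤ π y) → (∑ y, π y = 1) →
      (∑ y, π y * δ y) - KL π πminus ≤ (∑ y, πplus y * δ y) - KL πplus πminus) :
    ∀ π : Y → ℝ, (∀ y, 0 ≤ π y) → (∑ y, π y = 1) →
      KL π πplus ≤ KL π πminus + (∑ y, (πminus y - π y) * δ y) +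
        2 * (⨆ y, |δ y|) ^ 2 := by
  -- setup: Z and the softmax q
  set Z : ℝ := ∑ y, πminus y * Real.exp (δ y) with hZdef
  have hZpos : 0 < Z := Finset.sum_pos (fun y _ => mul_pos (hm0 y) (Real.exp_pos _)) ⟨Classical.arbitrary Y, Finset.mem_univ _⟩
  set q : Y → ℝ := fun y => πminus y * Real.exp (δ y) / Z with hqdef
  have hq0 : ∀ y, 0 < q y := fun y => div_pos (mul_pos (hm0 y) (Real.exp_pos _)) hZpos
  have hq1 : ∑ y, q y = 1 := by
    simp only [hqdef]
    rw [← Finset.sum_div]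
    field_simp
    exact hZdef.symm
  -- key identity: for any distribution π, KL π q = KL π πminus - ∑ π δ + log Z
  have key : ∀ π : Y → ℝ, (∀ y, 0 ≤ π y) → (∑ y, π y = 1) →
      KL π q = KL π πminus - (∑ y, π y * δ y) + Real.log Z := by
    intro π hpi0 hpi1
    have hterm : ∀ y, π y * Real.log (π y / q y)
        = π y * Real.log (π y / πminus y) - π y * δ y + π y * Real.log Z := by
      intro y
      rcases eq_or_lt_of_le (hpi0 y) with h | h
      · simp [← h]
      · have hπm := hm0 y
        have hq := hq0 y
        have : π y / q y = (π y / πminus y) * (Real.exp (δ y))⁻¹ * Z := by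
          simp only [hqdef]
          field_simp
        rw [this, Real.log_mul (by positivity) (ne_of_gt hZpos),
          Real.log_mul (by positivity) (by positivity),
          Real.log_inv, Real.log_exp]
        ring
    unfold KL
    rw [Finset.sum_congr rfl (fun y _ => hterm y)]
    rw [Finset.sum_add_distrib, Finset.sum_sub_distrib, ← Finset.sum_mul, hpi1, one_mul]
  -- KL q q = 0
  have hKLqq : KL q q = 0 := by
    unfold KL
    apply Finset.sum_eq_zero
    intro y _
    rw [div_self (ne_of_gt (hq0 y)), Real.log_one, mul_zero]
  -- from argmax: KL πplus q ≤ 0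
  have hle : KL πplus q ≤ 0 := by
    have h1 := hargmax q (fun y => (hq0 y).le) hq1
    have h2 := key q (fun y => (hq0 y).le) hq1
    have h3 := key πplus (fun y => (hp0 y).le) hp1
    rw [hKLqq] at h2
    linarith
  -- Gibbs: πplus = q
  have hplus_eq : ∀ y, πplus y = q y := by
    have hsum0 : ∑ y, (πplus y * Real.log (πplus y / q y) - (πplus y - q y)) = 0 := by
      have : ∑ y, (πplus y * Real.log (πplus y / q y) - (πplus y - q y))
          = KL πplus q - (1 - 1) := by
        unfold KL
        rw [Finset.sum_sub_distrib, Finset.sum_sub_distrib, hp1, hq1]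
      rw [this]
      have hge : 0 ≤ KL πplus q := by
        have : ∑ y, (πplus y - q y) ≤ KL πplus q := by
          unfold KL
          apply Finset.sum_le_sum
          intro y _
          exact kl_term_nonneg (hp0 y) (hq0 y)
        rw [Finset.sum_sub_distrib, hp1, hq1] at this
        linarith
      linarith
    have hall := (Finset.sum_eq_zero_iff_of_nonneg (fun y _ => by
      have := kl_term_nonneg (hp0 y) (hq0 y); linarith)).mp hsum0
    intro y
    exact kl_term_eq (hp0 y) (hq0 y) (hall y (Finset.mem_univ y))
  -- logZ bound
  set M : ℝ := ⨆ y, |δ y| with hMdef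
  have hbdd : BddAbove (Set.range fun y => |δ y|) := Set.Finite.bddAbove (Set.finite_range _)
  have hM : ∀ y, |δ y| ≤ M := fun y => le_ciSup hbdd y
  have hM0 : 0 ≤ M := le_trans (abs_nonneg _) (hM (Classical.arbitrary Y))
  have hlogZ : Real.log Z ≤ (∑ y, πminus y * δ y) + 2 * M ^ 2 := by
    rcases le_or_gt M 1 with hM1 | hM1
    · -- use exp x ≤ 1 + x + x², x² ≤ M²
      have hZle : Z ≤ 1 + (∑ y, πminus y * δ y) + M ^ 2 := by
        have : Z ≤ ∑ y, πminus y * (1 + δ y + M ^ 2) := by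
          apply Finset.sum_le_sum
          intro y _
          apply mul_le_mul_of_nonneg_left _ (hm0 y).le
          calc Real.exp (δ y) ≤ 1 + δ y + (δ y) ^ 2 :=
                exp_le_one_add_add_sq (le_trans (hM y) hM1)
            _ ≤ 1 + δ y + M ^ 2 := by
                have := sq_le_sq' (neg_le_of_abs_le (hM y)) (le_of_abs_le (hM y))
                linarith
        calc Z ≤ ∑ y, πminus y * (1 + δ y + M ^ 2) := this
          _ = 1 + (∑ y, πminus y * δ y) + M ^ 2 := by
              simp only [mul_add, mul_one]
              rw [Finset.sum_add_distrib, Finset.sum_add_distrib, hm1, ← Finset.sum_mul, hm1]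
              ring
      have := Real.log_le_sub_one_of_pos hZpos
      nlinarith
    · -- use log Z ≤ M and ∑ πminus δ ≥ -M
      have hZle : Z ≤ Real.exp M := by
        calc Z ≤ ∑ y, πminus y * Real.exp M := by
              apply Finset.sum_le_sum
              intro y _
              exact mul_le_mul_of_nonneg_left
                (Real.exp_le_exp.mpr (le_of_abs_le (hM y))) (hm0 y).le
          _ = Real.exp M := by rw [← Finset.sum_mul, hm1, one_mul]
      have hlog : Real.log Z ≤ M := by
        calc Real.log Z ≤ Real.log (Real.exp M) :=
              Real.log_le_log hZpos hZle
          _ = M := Real.log_exp M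
      have hlb : -M ≤ ∑ y, πminus y * δ y := by
        have : ∑ y, πminus y * (-M) ≤ ∑ y, πminus y * δ y := by
          apply Finset.sum_le_sum
          intro y _
          exact mul_le_mul_of_nonneg_left (neg_le_of_abs_le (hM y)) (hm0 y).le
        rw [← Finset.sum_mul, hm1, one_mul] at this
        linarith
      nlinarith
  -- conclude
  intro π hpi0 hpi1
  have hKLq : KL π πplus = KL π q := by
    unfold KL
    apply Finset.sum_congr rfl
    intro y _
    rw [hplus_eq y]
  rw [hKLq, key π hpi0 hpi1]
  have hsplit : ∑ y, (πminus y - π y) * δ y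
      = (∑ y, πminus y * δ y) - (∑ y, π y * δ y) := by
    rw [← Finset.sum_sub_distrib]
    apply Finset.sum_congr rfl
    intro y _; ring
  rw [hsplit]
  linarith
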